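/- Let A be a commutative ring with 2 invertible, B a commutative A-algebra, and C := (B ⊗_A B ⊗_A B)/(I_{01}² + I_{02}² + I_{12}²), where I_{ij} is the kernel of the map merging tensor factors i and j. Let J̃_{ij} denote the image of I_{ij} in C. Then J̃_{01} · J̃_{12} = J̃_{01} ∩ J̃_{12} = J̃_{01} · J̃_{02} = J̃_{01} ∩ J̃_{02} = J̃_{01} ∩ J̃_{02} ∩ J̃_{12}. -/

import Mathlib

open scoped TensorProduct
open PiTensorProduct

variable (A B : Type) [CommRing A] [CommRing B] [Algebra A B]

abbrev Bpow (n : ℕ) : Type := ⨂[A] (_ : Fin n), B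

noncomputable def rmap {m n : ℕ} (r : Fin m → Fin n) : Bpow A B m →ₐ[A] Bpow A B n :=
  PiTensorProduct.liftAlgHom
    ((MultilinearMap.mkPiAlgebra A (Fin m) (Bpow A B n)).compLinearMap
      (fun k => (PiTensorProduct.singleAlgHom (R := A) (A := fun _ : Fin n => B) (r k)).toLinearMap))
    (by simp [← PiTensorProduct.one_def])
    (by intro x y
        simp only [MultilinearMap.compLinearMap_apply, MultilinearMap.mkPiAlgebra_apply,
          Pi.mul_apply, AlgHom.toLinearMap_apply, _root_.map_mul, Finset.prod_mul_distrib])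

noncomputable def mergeN (n i j : ℕ) (hij : i < j) (hj : j ≤ n) :
    Bpow A B (n+1) →ₐ[A] Bpow A B n :=
  rmap A B (fun k => if h1 : k.val < j then ⟨k.val, by omega⟩
    else if h2 : k.val = j then ⟨i, by omega⟩
    else ⟨k.val - 1, by have := k.isLt; omega⟩)

noncomputable def Iideal (n i j : ℕ) (hij : i < j) (hj : j ≤ n) : Ideal (Bpow A B (n+1)) :=
  RingHom.ker (mergeN A B n i j hij hj)

noncomputable def Kideal (n : ℕ) : Ideal (Bpow A B (n+1)) :=
  ⨆ (i : ℕ) (j : ℕ) (hij : i < j) (hj : j ≤ n), (Iideal A B n i j hij hj) ^ 2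

abbrev Cq (n : ℕ) : Type := Bpow A B (n+1) ⧸ Kideal A B n

noncomputable def Jt (n i j : ℕ) (hij : i < j) (hj : j ≤ n) : Ideal (Cq A B n) :=
  Ideal.map (Ideal.Quotient.mk (Kideal A B n)) (Iideal A B n i j hij hj)

noncomputable def dElt (n i j : ℕ) (hi : i ≤ n) (hj : j ≤ n) (y : B) : Bpow A B (n+1) :=
  PiTensorProduct.singleAlgHom (R := A) (A := fun _ : Fin (n+1) => B) ⟨j, by omega⟩ y
    - PiTensorProduct.singleAlgHom (R := A) (A := fun _ : Fin (n+1) => B) ⟨i, by omega⟩ y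

noncomputable def insN (n j : ℕ) (hj : j ≤ n+1) : Bpow A B (n+1) →ₐ[A] Bpow A B (n+2) :=
  rmap A B (fun k => if h : k.val < j then ⟨k.val, by omega⟩
    else ⟨k.val + 1, by have := k.isLt; omega⟩)

noncomputable def eN (n : ℕ) : Bpow A B (n+1) →ₗ[A] Bpow A B (n+2) :=
  ∑ j : Fin (n+2), ((-1 : ℤ) ^ (j : ℕ)) • (insN A B n j (by omega)).toLinearMap

noncomputable def smashG (m n N : ℕ) (h : N = m + n) (x : Bpow A B (m+1)) (y : Bpow A B (n+1)) :
    Bpow A B (N+1) :=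
  rmap A B (fun k : Fin (m+1) => (⟨k.val, by have := k.isLt; omega⟩ : Fin (N+1))) x *
  rmap A B (fun k : Fin (n+1) => (⟨m + k.val, by have := k.isLt; omega⟩ : Fin (N+1))) y


lemma rmap_tprod {m n : ℕ} (r : Fin m → Fin n) (x : Fin m → B) :
    rmap A B r (tprod A x) = ∏ k, (PiTensorProduct.singleAlgHom (R := A) (A := fun _ : Fin n => B) (r k)) (x k) := by
  erw [PiTensorProduct.lift.tprod]
  simp

lemma rmap_single {m n : ℕ} (r : Fin m → Fin n) (i : Fin m) (y : B) :
    rmap A B r (PiTensorProduct.singleAlgHom (R := A) (A := fun _ : Fin m => B) i y)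
      = PiTensorProduct.singleAlgHom (R := A) (A := fun _ : Fin n => B) (r i) y := by
  rw [PiTensorProduct.singleAlgHom_apply, rmap_tprod]
  rw [Finset.prod_eq_single i ?h1 (by simp)]
  · simp
  · intro k _ hk
    rw [MonoidHom.mulSingle_apply, Pi.mulSingle_eq_of_ne hk]
    simpa using map_one (PiTensorProduct.singleAlgHom (R := A) (A := fun _ : Fin n => B) (r k))

lemma rmap_comp {m n p : ℕ} (s : Fin n → Fin p) (r : Fin m → Fin n) :
    (rmap A B s).comp (rmap A B r) = rmap A B (s ∘ r) := by
  ext i y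
  have h1 := rmap_single A B r i y
  have h2 := rmap_single A B s (r i) y
  have h3 := rmap_single A B (s ∘ r) i y
  simp only [PiTensorProduct.singleAlgHom_apply, MonoidHom.mulSingle_apply] at h1 h2 h3
  simp [h1, h2, h3]

lemma rmap_id {m : ℕ} : rmap A B (id : Fin m → Fin m) = AlgHom.id A (Bpow A B m) := by
  ext i y
  have h1 := rmap_single A B (id : Fin m → Fin m) i y
  simp only [PiTensorProduct.singleAlgHom_apply, MonoidHom.mulSingle_apply] at h1
  simpa using h1

lemma tprodEqProd {m : ℕ} (x : Fin m → B) :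
    (tprod A x : Bpow A B m) = ∏ k, (PiTensorProduct.singleAlgHom (R := A) (A := fun _ : Fin m => B) k) (x k) := by
  have := rmap_tprod A B (id : Fin m → Fin m) x
  rw [rmap_id] at this
  simpa using this


lemma sub_rmap_mem_span (n i j : ℕ) (hij : i < j) (hj : j ≤ n)
    (t : Fin (n+1) → Fin (n+1)) (h1 : t ⟨j, by omega⟩ = ⟨i, by omega⟩)
    (h2 : ∀ k, k ≠ (⟨j, by omega⟩ : Fin (n+1)) → t k = k) (x : Bpow A B (n+1)) :
    x - rmap A B t x ∈ Ideal.span (Set.range (dElt A B n i j (by omega) hj)) := by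
  induction x using PiTensorProduct.induction_on with
  | smul_tprod r f =>
      rw [map_smul, ← smul_sub, Algebra.smul_def]
      refine Ideal.mul_mem_left _ _ ?_
      rw [rmap_tprod, tprodEqProd]
      rw [← Finset.mul_prod_erase Finset.univ _
            (Finset.mem_univ (⟨j, by omega⟩ : Fin (n+1))),
          ← Finset.mul_prod_erase Finset.univ
            (fun k => (PiTensorProduct.singleAlgHom (R := A) (A := fun _ : Fin (n+1) => B) (t k)) (f k))
            (Finset.mem_univ (⟨j, by omega⟩ : Fin (n+1)))]
      have hpr : (∏ k ∈ Finset.univ.erase (⟨j, by omega⟩ : Fin (n+1)),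
            (PiTensorProduct.singleAlgHom (R := A) (A := fun _ : Fin (n+1) => B) (t k)) (f k))
          = ∏ k ∈ Finset.univ.erase (⟨j, by omega⟩ : Fin (n+1)),
            (PiTensorProduct.singleAlgHom (R := A) (A := fun _ : Fin (n+1) => B) k) (f k) :=
        Finset.prod_congr rfl (fun k hk => by rw [h2 k (Finset.ne_of_mem_erase hk)])
      rw [hpr, h1, ← sub_mul]
      exact Ideal.mul_mem_right _ _ (Ideal.subset_span ⟨f ⟨j, by omega⟩, rfl⟩)
  | add x y hx hy =>
      have : (x + y) - rmap A B t (x + y) = (x - rmap A B t x) + (y - rmap A B t y) := by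
        rw [map_add]; ring
      rw [this]
      exact Submodule.add_mem _ hx hy


lemma mu12_comp_pi12 : (mergeN A B 2 1 2 (by decide) (by decide)).comp (rmap A B ![0,1,1]) =
    mergeN A B 2 1 2 (by decide) (by decide) := by
  unfold mergeN
  rw [rmap_comp]
  exact congrArg _ (funext fun k => by fin_cases k <;> decide)

section Dim2

lemma mem_Iideal_iff (n i j : ℕ) (hij : i < j) (hj : j ≤ n) (x : Bpow A B (n+1)) :
    x ∈ Iideal A B n i j hij hj ↔ mergeN A B n i j hij hj x = 0 := by
  unfold Iideal
  exact RingHom.mem_ker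

lemma Iideal_eq_span_aux (i j : ℕ) (hij : i < j) (hj : j ≤ 2)
    (t : Fin (2+1) → Fin (2+1)) (s : Fin 2 → Fin (2+1))
    (h1 : t ⟨j, by omega⟩ = ⟨i, by omega⟩)
    (h2 : ∀ k, k ≠ (⟨j, by omega⟩ : Fin (2+1)) → t k = k)
    (h3 : (rmap A B s).comp (mergeN A B 2 i j hij hj) = rmap A B t)
    (h4 : ∀ y : B, mergeN A B 2 i j hij hj (dElt A B 2 i j (by omega) hj y) = 0) :
    Iideal A B 2 i j hij hj = Ideal.span (Set.range (dElt A B 2 i j (by omega) hj)) := by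
  apply le_antisymm
  · intro x hx
    have hx0 : mergeN A B 2 i j hij hj x = 0 := (mem_Iideal_iff A B 2 i j hij hj x).mp hx
    have hpi : rmap A B t x = 0 := by
      rw [← h3]
      show rmap A B s (mergeN A B 2 i j hij hj x) = 0
      rw [hx0, map_zero]
    have h := sub_rmap_mem_span A B 2 i j hij hj t h1 h2 x
    rwa [hpi, sub_zero] at h
  · rw [Ideal.span_le]
    rintro _ ⟨b, rfl⟩
    exact (mem_Iideal_iff A B 2 i j hij hj _).mpr (h4 b)

lemma merge_dElt (i j : ℕ) (hij : i < j) (hj : j ≤ 2) (y : B) :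
    mergeN A B 2 i j hij hj (dElt A B 2 i j (by omega) hj y) = 0 := by
  unfold dElt mergeN
  rw [map_sub, rmap_single, rmap_single]
  rw [sub_eq_zero]
  refine congrArg (fun z : Fin 2 => (PiTensorProduct.singleAlgHom (R := A) (A := fun _ : Fin 2 => B) z) y) ?_
  show (if h1 : j < j then (⟨j, by omega⟩ : Fin 2) else if h2 : j = j then ⟨i, by omega⟩
      else ⟨j - 1, by omega⟩) = if h1 : i < j then (⟨i, by omega⟩ : Fin 2) else if h2 : i = j
        then ⟨i, by omega⟩ else ⟨i - 1, by omega⟩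
  rw [dif_neg (lt_irrefl j), dif_pos rfl, dif_pos hij]

lemma I01_span : Iideal A B 2 0 1 (by decide) (by decide)
    = Ideal.span (Set.range (dElt A B 2 0 1 (by decide) (by decide))) :=
  Iideal_eq_span_aux A B 0 1 (by decide) (by decide) ![0,0,2] ![0,2] (by decide)
    (by decide)
    (by unfold mergeN; rw [rmap_comp]; exact congrArg _ (funext fun k => by fin_cases k <;> decide))
    (merge_dElt A B 0 1 (by decide) (by decide))

lemma I02_span : Iideal A B 2 0 2 (by decide) (by decide)
    = Ideal.span (Set.range (dElt A B 2 0 2 (by decide) (by decide))) :=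
  Iideal_eq_span_aux A B 0 2 (by decide) (by decide) ![0,1,0] ![0,1] (by decide)
    (by decide)
    (by unfold mergeN; rw [rmap_comp]; exact congrArg _ (funext fun k => by fin_cases k <;> decide))
    (merge_dElt A B 0 2 (by decide) (by decide))

lemma I12_span : Iideal A B 2 1 2 (by decide) (by decide)
    = Ideal.span (Set.range (dElt A B 2 1 2 (by decide) (by decide))) :=
  Iideal_eq_span_aux A B 1 2 (by decide) (by decide) ![0,1,1] ![0,1] (by decide)
    (by decide)
    (by unfold mergeN; rw [rmap_comp]; exact congrArg _ (funext fun k => by fin_cases k <;> decide))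
    (merge_dElt A B 1 2 (by decide) (by decide))

end Dim2

section Quot

lemma sq_le_K (i j : ℕ) (hij : i < j) (hj : j ≤ 2) :
    Iideal A B 2 i j hij hj ^ 2 ≤ Kideal A B 2 := by
  unfold Kideal
  exact le_iSup_of_le i (le_iSup_of_le j (le_iSup_of_le hij (le_iSup_of_le hj le_rfl)))

lemma map_ker_le (t : Fin (2+1) → Fin (2+1)) (i j : ℕ) (hij : i < j) (hj : j ≤ 2)
    (i' j' : ℕ) (hij' : i' < j') (hj' : j' ≤ 2) (u : Fin 2 → Fin 2)
    (h : (mergeN A B 2 i' j' hij' hj').comp (rmap A B t) =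
      (rmap A B u).comp (mergeN A B 2 i j hij hj)) :
    Ideal.map (rmap A B t).toRingHom (Iideal A B 2 i j hij hj)
      ≤ Iideal A B 2 i' j' hij' hj' := by
  rw [Ideal.map_le_iff_le_comap]
  intro x hx
  have hx0 : mergeN A B 2 i j hij hj x = 0 := (mem_Iideal_iff A B 2 i j hij hj x).mp hx
  show rmap A B t x ∈ Iideal A B 2 i' j' hij' hj'
  rw [mem_Iideal_iff]
  have := DFunLike.congr_fun h x
  simp only [AlgHom.comp_apply] at this
  rw [this, hx0, map_zero]

lemma desc12 (i j : ℕ) (hij : i < j) (hj : j ≤ 2) :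
    (mergeN A B 2 0 1 (by decide) (by decide)).comp (rmap A B ![0,1,1]) =
    (rmap A B (![0,0] : Fin 2 → Fin 2)).comp (mergeN A B 2 i j hij hj) := by
  unfold mergeN
  rw [rmap_comp, rmap_comp]
  apply congrArg
  funext k
  interval_cases j <;> interval_cases i <;> fin_cases k <;> rfl

lemma desc02 (i j : ℕ) (hij : i < j) (hj : j ≤ 2) :
    (mergeN A B 2 0 1 (by decide) (by decide)).comp (rmap A B ![0,1,0]) =
    (rmap A B (![0,0] : Fin 2 → Fin 2)).comp (mergeN A B 2 i j hij hj) := by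
  unfold mergeN
  rw [rmap_comp, rmap_comp]
  apply congrArg
  funext k
  interval_cases j <;> interval_cases i <;> fin_cases k <;> rfl

lemma map_K_le (t : Fin (2+1) → Fin (2+1))
    (h : ∀ (i j : ℕ) (hij : i < j) (hj : j ≤ 2),
      Ideal.map (rmap A B t).toRingHom (Iideal A B 2 i j hij hj)
        ≤ Iideal A B 2 0 1 (by decide) (by decide)) :
    Ideal.map (rmap A B t).toRingHom (Kideal A B 2) ≤ Kideal A B 2 := by
  unfold Kideal
  rw [Ideal.map_iSup]
  refine iSup_le fun i => ?_
  rw [Ideal.map_iSup]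
  refine iSup_le fun j => ?_
  rw [Ideal.map_iSup]
  refine iSup_le fun hij => ?_
  rw [Ideal.map_iSup]
  refine iSup_le fun hj => ?_
  rw [Ideal.map_pow]
  calc Ideal.map (rmap A B t).toRingHom (Iideal A B 2 i j hij hj) ^ 2
      ≤ Iideal A B 2 0 1 (by decide) (by decide) ^ 2 := Ideal.pow_right_mono (h i j hij hj) 2
    _ ≤ ⨆ (i : ℕ) (j : ℕ) (hij : i < j) (hj : j ≤ 2), (Iideal A B 2 i j hij hj) ^ 2 :=
        sq_le_K A B 0 1 (by decide) (by decide)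

end Quot

section Pmaps

lemma pi12_sec : (rmap A B (![0,1] : Fin 2 → Fin (2+1))).comp
    (mergeN A B 2 1 2 (by decide) (by decide)) = rmap A B ![0,1,1] := by
  unfold mergeN
  rw [rmap_comp]
  exact congrArg _ (funext fun k => by fin_cases k <;> decide)

lemma pi02_sec : (rmap A B (![0,1] : Fin 2 → Fin (2+1))).comp
    (mergeN A B 2 0 2 (by decide) (by decide)) = rmap A B ![0,1,0] := by
  unfold mergeN
  rw [rmap_comp]
  exact congrArg _ (funext fun k => by fin_cases k <;> decide)

lemma mu02_comp_pi02 : (mergeN A B 2 0 2 (by decide) (by decide)).comp (rmap A B ![0,1,0]) =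
    mergeN A B 2 0 2 (by decide) (by decide) := by
  unfold mergeN
  rw [rmap_comp]
  exact congrArg _ (funext fun k => by fin_cases k <;> decide)

lemma mapK12 : Ideal.map (rmap A B (![0,1,1] : Fin (2+1) → Fin (2+1))).toRingHom
    (Kideal A B 2) ≤ Kideal A B 2 :=
  map_K_le A B _ (fun i j hij hj => map_ker_le A B _ i j hij hj 0 1 (by decide) (by decide)
    ![0,0] (desc12 A B i j hij hj))

lemma mapK02 : Ideal.map (rmap A B (![0,1,0] : Fin (2+1) → Fin (2+1))).toRingHom
    (Kideal A B 2) ≤ Kideal A B 2 :=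
  map_K_le A B _ (fun i j hij hj => map_ker_le A B _ i j hij hj 0 1 (by decide) (by decide)
    ![0,0] (desc02 A B i j hij hj))

noncomputable def p12 : Cq A B 2 →+* Cq A B 2 :=
  Ideal.Quotient.lift (Kideal A B 2)
    ((Ideal.Quotient.mk (Kideal A B 2)).comp (rmap A B (![0,1,1] : Fin (2+1) → Fin (2+1))).toRingHom)
    (fun a ha => by
      rw [RingHom.comp_apply, Ideal.Quotient.eq_zero_iff_mem]
      exact mapK12 A B (Ideal.mem_map_of_mem _ ha))

noncomputable def p02 : Cq A B 2 →+* Cq A B 2 :=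
  Ideal.Quotient.lift (Kideal A B 2)
    ((Ideal.Quotient.mk (Kideal A B 2)).comp (rmap A B (![0,1,0] : Fin (2+1) → Fin (2+1))).toRingHom)
    (fun a ha => by
      rw [RingHom.comp_apply, Ideal.Quotient.eq_zero_iff_mem]
      exact mapK02 A B (Ideal.mem_map_of_mem _ ha))

lemma p12_mk (x : Bpow A B (2+1)) : p12 A B (Ideal.Quotient.mk (Kideal A B 2) x)
    = Ideal.Quotient.mk (Kideal A B 2) (rmap A B ![0,1,1] x) := rfl

lemma p02_mk (x : Bpow A B (2+1)) : p02 A B (Ideal.Quotient.mk (Kideal A B 2) x)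
    = Ideal.Quotient.mk (Kideal A B 2) (rmap A B ![0,1,0] x) := rfl

lemma sub_p12_mem (x : Cq A B 2) : x - p12 A B x ∈ Jt A B 2 1 2 (by decide) (by decide) := by
  obtain ⟨y, rfl⟩ := Ideal.Quotient.mk_surjective x
  rw [p12_mk, ← map_sub]
  refine Ideal.mem_map_of_mem _ ?_
  rw [mem_Iideal_iff, map_sub]
  have h := DFunLike.congr_fun (mu12_comp_pi12 A B) y
  simp only [AlgHom.comp_apply] at h
  rw [h, sub_self]

lemma sub_p02_mem (x : Cq A B 2) : x - p02 A B x ∈ Jt A B 2 0 2 (by decide) (by decide) := by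
  obtain ⟨y, rfl⟩ := Ideal.Quotient.mk_surjective x
  rw [p02_mk, ← map_sub]
  refine Ideal.mem_map_of_mem _ ?_
  rw [mem_Iideal_iff, map_sub]
  have h := DFunLike.congr_fun (mu02_comp_pi02 A B) y
  simp only [AlgHom.comp_apply] at h
  rw [h, sub_self]

lemma p12_J12 (x : Cq A B 2) (hx : x ∈ Jt A B 2 1 2 (by decide) (by decide)) :
    p12 A B x = 0 := by
  have h : Jt A B 2 1 2 (by decide) (by decide) ≤ RingHom.ker (p12 A B) := by
    unfold Jt
    rw [Ideal.map_le_iff_le_comap]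
    intro y hy
    rw [Ideal.mem_comap, RingHom.mem_ker, p12_mk]
    have h0 : rmap A B (![0,1,1] : Fin (2+1) → Fin (2+1)) y = 0 := by
      rw [← pi12_sec]
      show rmap A B ![0,1] (mergeN A B 2 1 2 (by decide) (by decide) y) = 0
      rw [(mem_Iideal_iff A B 2 1 2 (by decide) (by decide) y).mp hy, map_zero]
    rw [h0, map_zero]
  exact h hx

lemma p02_J02 (x : Cq A B 2) (hx : x ∈ Jt A B 2 0 2 (by decide) (by decide)) :
    p02 A B x = 0 := by
  have h : Jt A B 2 0 2 (by decide) (by decide) ≤ RingHom.ker (p02 A B) := by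
    unfold Jt
    rw [Ideal.map_le_iff_le_comap]
    intro y hy
    rw [Ideal.mem_comap, RingHom.mem_ker, p02_mk]
    have h0 : rmap A B (![0,1,0] : Fin (2+1) → Fin (2+1)) y = 0 := by
      rw [← pi02_sec]
      show rmap A B ![0,1] (mergeN A B 2 0 2 (by decide) (by decide) y) = 0
      rw [(mem_Iideal_iff A B 2 0 2 (by decide) (by decide) y).mp hy, map_zero]
    rw [h0, map_zero]
  exact h hx

end Pmaps

section Main

lemma p12_J01 (x : Cq A B 2) (hx : x ∈ Jt A B 2 0 1 (by decide) (by decide)) :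
    p12 A B x ∈ Jt A B 2 0 1 (by decide) (by decide) := by
  have h : Ideal.map (p12 A B) (Jt A B 2 0 1 (by decide) (by decide))
      ≤ Jt A B 2 0 1 (by decide) (by decide) := by
    unfold Jt
    rw [Ideal.map_map]
    have he : (p12 A B).comp (Ideal.Quotient.mk (Kideal A B 2)) =
        (Ideal.Quotient.mk (Kideal A B 2)).comp
          (rmap A B (![0,1,1] : Fin (2+1) → Fin (2+1))).toRingHom := rfl
    rw [he, ← Ideal.map_map]
    exact Ideal.map_mono (map_ker_le A B _ 0 1 (by decide) (by decide) 0 1 (by decide) (by decide)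
      ![0,0] (desc12 A B 0 1 (by decide) (by decide)))
  exact h (Ideal.mem_map_of_mem _ hx)

lemma p02_J01 (x : Cq A B 2) (hx : x ∈ Jt A B 2 0 1 (by decide) (by decide)) :
    p02 A B x ∈ Jt A B 2 0 1 (by decide) (by decide) := by
  have h : Ideal.map (p02 A B) (Jt A B 2 0 1 (by decide) (by decide))
      ≤ Jt A B 2 0 1 (by decide) (by decide) := by
    unfold Jt
    rw [Ideal.map_map]
    have he : (p02 A B).comp (Ideal.Quotient.mk (Kideal A B 2)) =
        (Ideal.Quotient.mk (Kideal A B 2)).comp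
          (rmap A B (![0,1,0] : Fin (2+1) → Fin (2+1))).toRingHom := rfl
    rw [he, ← Ideal.map_map]
    exact Ideal.map_mono (map_ker_le A B _ 0 1 (by decide) (by decide) 0 1 (by decide) (by decide)
      ![0,0] (desc02 A B 0 1 (by decide) (by decide)))
  exact h (Ideal.mem_map_of_mem _ hx)

lemma p12_dElt (b : B) : p12 A B (Ideal.Quotient.mk (Kideal A B 2)
      (dElt A B 2 0 1 (by decide) (by decide) b))
    = Ideal.Quotient.mk (Kideal A B 2) (dElt A B 2 0 1 (by decide) (by decide) b) := by
  rw [p12_mk]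
  congr 1
  unfold dElt
  rw [map_sub, rmap_single, rmap_single]
  rfl

lemma p02_dElt (b : B) : p02 A B (Ideal.Quotient.mk (Kideal A B 2)
      (dElt A B 2 0 1 (by decide) (by decide) b))
    = Ideal.Quotient.mk (Kideal A B 2) (dElt A B 2 0 1 (by decide) (by decide) b) := by
  rw [p02_mk]
  congr 1
  unfold dElt
  rw [map_sub, rmap_single, rmap_single]
  rfl

lemma key_aux (p : Cq A B 2 →+* Cq A B 2) (Q : Ideal (Cq A B 2))
    (hfix : ∀ b : B, p (Ideal.Quotient.mk (Kideal A B 2) (dElt A B 2 0 1 (by decide) (by decide) b))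
      = Ideal.Quotient.mk (Kideal A B 2) (dElt A B 2 0 1 (by decide) (by decide) b))
    (hsub : ∀ x : Cq A B 2, x - p x ∈ Q)
    (hJ : ∀ x ∈ Jt A B 2 0 1 (by decide) (by decide), p x ∈ Jt A B 2 0 1 (by decide) (by decide)) :
    ∀ x ∈ Jt A B 2 0 1 (by decide) (by decide),
      x - p x ∈ Jt A B 2 0 1 (by decide) (by decide) * Q := by
  have hspan : Jt A B 2 0 1 (by decide) (by decide) = Ideal.span
      (Ideal.Quotient.mk (Kideal A B 2) '' Set.range (dElt A B 2 0 1 (by decide) (by decide))) := by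
    unfold Jt
    rw [I01_span, Ideal.map_span]
  intro x hx
  rw [hspan] at hx
  refine Submodule.span_induction ?_ ?_ ?_ ?_ hx
  · rintro y ⟨_, ⟨b, rfl⟩, rfl⟩
    rw [hfix, sub_self]
    exact zero_mem _
  · rw [map_zero, sub_zero]
    exact zero_mem _
  · intro u v hu hv hpu hpv
    have h : (u + v) - p (u + v) = (u - p u) + (v - p v) := by rw [map_add]; ring
    rw [h]
    exact add_mem hpu hpv
  · intro a y hy hpy
    rw [smul_eq_mul]
    have hyJ : y ∈ Jt A B 2 0 1 (by decide) (by decide) := by rw [hspan]; exact hy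
    have h1 : a * y - p (a * y) = a * (y - p y) + (a - p a) * p y := by rw [_root_.map_mul]; ring
    rw [h1]
    refine add_mem (Ideal.mul_mem_left _ _ hpy) ?_
    have h2 := Ideal.mul_mem_mul (hsub a) (hJ y hyJ)
    rwa [mul_comm Q] at h2

lemma inf_le_mul12 : Jt A B 2 0 1 (by decide) (by decide) ⊓ Jt A B 2 1 2 (by decide) (by decide)
    ≤ Jt A B 2 0 1 (by decide) (by decide) * Jt A B 2 1 2 (by decide) (by decide) := by
  intro x hx
  obtain ⟨h1, h2⟩ := hx
  have h0 := p12_J12 A B x h2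
  have h := key_aux A B (p12 A B) (Jt A B 2 1 2 (by decide) (by decide)) (p12_dElt A B)
    (sub_p12_mem A B) (p12_J01 A B) x h1
  rwa [h0, sub_zero] at h

lemma inf_le_mul02 : Jt A B 2 0 1 (by decide) (by decide) ⊓ Jt A B 2 0 2 (by decide) (by decide)
    ≤ Jt A B 2 0 1 (by decide) (by decide) * Jt A B 2 0 2 (by decide) (by decide) := by
  intro x hx
  obtain ⟨h1, h2⟩ := hx
  have h0 := p02_J02 A B x h2
  have h := key_aux A B (p02 A B) (Jt A B 2 0 2 (by decide) (by decide)) (p02_dElt A B)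
    (sub_p02_mem A B) (p02_J01 A B) x h1
  rwa [h0, sub_zero] at h

lemma J01_sq : Jt A B 2 0 1 (by decide) (by decide) * Jt A B 2 0 1 (by decide) (by decide) = ⊥ := by
  unfold Jt
  rw [← Ideal.map_mul]
  have h : Iideal A B 2 0 1 (by decide) (by decide) * Iideal A B 2 0 1 (by decide) (by decide)
      ≤ Kideal A B 2 := by
    have := sq_le_K A B 0 1 (by decide) (by decide)
    rwa [pow_two] at this
  exact le_bot_iff.mp ((Ideal.map_mono h).trans (by rw [Ideal.map_quotient_self]))

lemma dElt_split (b : B) : dElt A B 2 0 2 (by decide) (by decide) b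
    = dElt A B 2 0 1 (by decide) (by decide) b + dElt A B 2 1 2 (by decide) (by decide) b := by
  unfold dElt
  abel

lemma J02_le_sup : Jt A B 2 0 2 (by decide) (by decide)
    ≤ Jt A B 2 0 1 (by decide) (by decide) ⊔ Jt A B 2 1 2 (by decide) (by decide) := by
  unfold Jt
  rw [← Ideal.map_sup]
  apply Ideal.map_mono
  rw [I02_span, Ideal.span_le]
  rintro _ ⟨b, rfl⟩
  rw [dElt_split]
  have h1 : dElt A B 2 0 1 (by decide) (by decide) b ∈ Iideal A B 2 0 1 (by decide) (by decide) := by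
    rw [I01_span]; exact Ideal.subset_span ⟨b, rfl⟩
  have h2 : dElt A B 2 1 2 (by decide) (by decide) b ∈ Iideal A B 2 1 2 (by decide) (by decide) := by
    rw [I12_span]; exact Ideal.subset_span ⟨b, rfl⟩
  exact Submodule.add_mem _ (Ideal.mem_sup_left h1) (Ideal.mem_sup_right h2)

lemma J12_le_sup : Jt A B 2 1 2 (by decide) (by decide)
    ≤ Jt A B 2 0 1 (by decide) (by decide) ⊔ Jt A B 2 0 2 (by decide) (by decide) := by
  unfold Jt
  rw [← Ideal.map_sup]
  apply Ideal.map_mono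
  rw [I12_span, Ideal.span_le]
  rintro _ ⟨b, rfl⟩
  have hs : dElt A B 2 1 2 (by decide) (by decide) b
      = dElt A B 2 0 2 (by decide) (by decide) b - dElt A B 2 0 1 (by decide) (by decide) b := by
    rw [dElt_split]; ring
  rw [hs]
  have h1 : dElt A B 2 0 1 (by decide) (by decide) b ∈ Iideal A B 2 0 1 (by decide) (by decide) := by
    rw [I01_span]; exact Ideal.subset_span ⟨b, rfl⟩
  have h2 : dElt A B 2 0 2 (by decide) (by decide) b ∈ Iideal A B 2 0 2 (by decide) (by decide) := by
    rw [I02_span]; exact Ideal.subset_span ⟨b, rfl⟩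
  exact Submodule.sub_mem _ (Ideal.mem_sup_right h2) (Ideal.mem_sup_left h1)

lemma mul_12_eq_02 : Jt A B 2 0 1 (by decide) (by decide) * Jt A B 2 1 2 (by decide) (by decide)
    = Jt A B 2 0 1 (by decide) (by decide) * Jt A B 2 0 2 (by decide) (by decide) := by
  apply le_antisymm
  · calc Jt A B 2 0 1 (by decide) (by decide) * Jt A B 2 1 2 (by decide) (by decide)
        ≤ Jt A B 2 0 1 (by decide) (by decide) *
          (Jt A B 2 0 1 (by decide) (by decide) ⊔ Jt A B 2 0 2 (by decide) (by decide)) :=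
          Ideal.mul_mono_right (J12_le_sup A B)
      _ = Jt A B 2 0 1 (by decide) (by decide) * Jt A B 2 0 1 (by decide) (by decide)
          ⊔ Jt A B 2 0 1 (by decide) (by decide) * Jt A B 2 0 2 (by decide) (by decide) :=
          Ideal.mul_sup _ _ _
      _ = Jt A B 2 0 1 (by decide) (by decide) * Jt A B 2 0 2 (by decide) (by decide) := by
          rw [J01_sq, bot_sup_eq]
  · calc Jt A B 2 0 1 (by decide) (by decide) * Jt A B 2 0 2 (by decide) (by decide)
        ≤ Jt A B 2 0 1 (by decide) (by decide) *
          (Jt A B 2 0 1 (by decide) (by decide) ⊔ Jt A B 2 1 2 (by decide) (by decide)) :=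
          Ideal.mul_mono_right (J02_le_sup A B)
      _ = Jt A B 2 0 1 (by decide) (by decide) * Jt A B 2 0 1 (by decide) (by decide)
          ⊔ Jt A B 2 0 1 (by decide) (by decide) * Jt A B 2 1 2 (by decide) (by decide) :=
          Ideal.mul_sup _ _ _
      _ = Jt A B 2 0 1 (by decide) (by decide) * Jt A B 2 1 2 (by decide) (by decide) := by
          rw [J01_sq, bot_sup_eq]

end Main


/-- If `2` is invertible in `A`, then in
`C = B^{⊗3}/(I_{01}² + I_{02}² + I_{12}²)` the images `J̃_{ij}` of the merge-kernels
satisfy `J̃_{01}·J̃_{12} = J̃_{01} ∩ J̃_{12} = J̃_{01}·J̃_{02} = J̃_{01} ∩ J̃_{02}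
= J̃_{01} ∩ J̃_{02} ∩ J̃_{12}`. -/
theorem statement6 (h2 : IsUnit (2 : A)) :
    Jt A B 2 0 1 (by omega) (by omega) * Jt A B 2 1 2 (by omega) (by omega)
      = Jt A B 2 0 1 (by omega) (by omega) ⊓ Jt A B 2 1 2 (by omega) (by omega) ∧
    Jt A B 2 0 1 (by omega) (by omega) ⊓ Jt A B 2 1 2 (by omega) (by omega)
      = Jt A B 2 0 1 (by omega) (by omega) * Jt A B 2 0 2 (by omega) (by omega) ∧
    Jt A B 2 0 1 (by omega) (by omega) * Jt A B 2 0 2 (by omega) (by omega)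
      = Jt A B 2 0 1 (by omega) (by omega) ⊓ Jt A B 2 0 2 (by omega) (by omega) ∧
    Jt A B 2 0 1 (by omega) (by omega) ⊓ Jt A B 2 0 2 (by omega) (by omega)
      = Jt A B 2 0 1 (by omega) (by omega) ⊓ Jt A B 2 0 2 (by omega) (by omega)
          ⊓ Jt A B 2 1 2 (by omega) (by omega) := by
  have e1 : Jt A B 2 0 1 (by omega) (by omega) * Jt A B 2 1 2 (by omega) (by omega)
      = Jt A B 2 0 1 (by omega) (by omega) ⊓ Jt A B 2 1 2 (by omega) (by omega) :=
    le_antisymm Ideal.mul_le_inf (inf_le_mul12 A B)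
  have e2 : Jt A B 2 0 1 (by omega) (by omega) * Jt A B 2 0 2 (by omega) (by omega)
      = Jt A B 2 0 1 (by omega) (by omega) ⊓ Jt A B 2 0 2 (by omega) (by omega) :=
    le_antisymm Ideal.mul_le_inf (inf_le_mul02 A B)
  refine ⟨e1, ?_, e2, ?_⟩
  · rw [← e1, mul_12_eq_02]
  · apply le_antisymm
    · refine le_inf le_rfl ?_
      rw [← e2, ← mul_12_eq_02]
      exact le_trans Ideal.mul_le_inf inf_le_right
    · exact inf_le_left
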